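/- Let R be a commutative ring, x ∈ R a non-zero divisor, A an R-algebra, and M a left A-module that is projective over R. Then the canonical map End_A(M) ⊗_R R/(x) → Hom_A(M, R/(x) ⊗_R M), sending f ⊗ (r + (x)) to the map m ↦ (r + (x)) ⊗ f(m), is injective. -/

import Mathlib

open TensorProduct

section BaseChangeAction

variable {R S A M : Type} [CommRing R] [CommRing S] [Algebra R S] [Ring A] [Algebra R A]
variable [AddCommGroup M] [Module A M] [Module R M] [IsScalarTower R A M]
variable [SMulCommClass A R M]

/-- The action of `a : A` on the second factor of `S ⊗[R] M`. -/
noncomputable def secondFactorSMul (a : A) : S ⊗[R] M →ₗ[R] S ⊗[R] M :=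
  LinearMap.lTensor S (Module.toModuleEnd R M a)

/-- `S ⊗[R] M` is a left `A`-module via the action of `A` on the second factor. -/
noncomputable instance (priority := 50) moduleBaseChange : Module A (S ⊗[R] M) where
  smul a z := secondFactorSMul (a := a) z
  one_smul z := by
    show secondFactorSMul (a := 1) z = z
    unfold secondFactorSMul
    rw [map_one]
    simp [Module.End.one_eq_id, LinearMap.lTensor_id]
  mul_smul a b z := by
    show secondFactorSMul (a := a * b) z
      = secondFactorSMul (a := a) (secondFactorSMul (a := b) z)
    unfold secondFactorSMul
    rw [map_mul, Module.End.mul_eq_comp, LinearMap.lTensor_comp, LinearMap.comp_apply]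
  smul_zero a := map_zero _
  smul_add a z w := map_add _ z w
  add_smul a b z := by
    show secondFactorSMul (a := a + b) z
      = secondFactorSMul (a := a) z + secondFactorSMul (a := b) z
    unfold secondFactorSMul
    rw [map_add, LinearMap.lTensor_add, LinearMap.add_apply]
  zero_smul z := by
    show secondFactorSMul (a := 0) z = 0
    unfold secondFactorSMul
    rw [map_zero, LinearMap.lTensor_zero, LinearMap.zero_apply]

lemma smul_tmul_baseChange (a : A) (s : S) (m : M) :
    a • (s ⊗ₜ[R] m : S ⊗[R] M) = s ⊗ₜ[R] (a • m) := rfl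

instance smulCommClass_baseChange : SMulCommClass A R (S ⊗[R] M) :=
  ⟨fun a r z => (secondFactorSMul (a := a) (S := S)).map_smul r z⟩

end BaseChangeAction

section CanonicalMap

variable {R A M : Type} [CommRing R] [Ring A] [Algebra R A]
variable [AddCommGroup M] [Module A M] [Module R M] [IsScalarTower R A M]
variable [SMulCommClass A R M] (x : R)

/-- For `f : End_A(M)` and `q : R/(x)`, the `A`-linear map `m ↦ q ⊗ f m`. -/
noncomputable def endTensorQuotAux (f : M →ₗ[A] M) (q : R ⧸ Ideal.span {x}) :
    M →ₗ[A] ((R ⧸ Ideal.span {x}) ⊗[R] M) where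
  toFun m := q ⊗ₜ[R] f m
  map_add' m m' := by simp [TensorProduct.tmul_add]
  map_smul' a m := by simp [smul_tmul_baseChange, map_smul]

/-- The canonical map `End_A(M) ⊗_R R/(x) → Hom_A(M, R/(x) ⊗_R M)` sending
`f ⊗ (r + (x))` to the map `m ↦ (r + (x)) ⊗ f m`. -/
noncomputable def endTensorQuotToHom :
    ((M →ₗ[A] M) ⊗[R] (R ⧸ Ideal.span {x})) →+
      (M →ₗ[A] ((R ⧸ Ideal.span {x}) ⊗[R] M)) :=
  TensorProduct.liftAddHom
    { toFun := fun f =>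
        { toFun := fun q => endTensorQuotAux x f q
          map_zero' := LinearMap.ext fun m => by simp [endTensorQuotAux]
          map_add' := fun q q' => LinearMap.ext fun m => by
            simp [endTensorQuotAux, TensorProduct.add_tmul] <;> rfl }
      map_zero' := AddMonoidHom.ext fun q => LinearMap.ext fun m => by
        simp [endTensorQuotAux]
      map_add' := fun f g => AddMonoidHom.ext fun q => LinearMap.ext fun m => by
        simp [endTensorQuotAux, TensorProduct.tmul_add] <;> rfl }
    (fun r f q => LinearMap.ext fun m => by
      simp [endTensorQuotAux, TensorProduct.tmul_smul, TensorProduct.smul_tmul'] <;> rfl)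

end CanonicalMap

/-- Let `R` be a commutative ring, `x ∈ R` a non-zero divisor, `A` an
`R`-algebra, and `M` a left `A`-module that is projective over `R`.  Then the canonical
map `End_A(M) ⊗_R R/(x) → Hom_A(M, R/(x) ⊗_R M)`, `f ⊗ (r + (x)) ↦ (m ↦ (r + (x)) ⊗ f m)`,
is injective. -/
theorem endTensorQuotToHom_injective
    (R : Type) [CommRing R] (x : R) (hx : ∀ r : R, x * r = 0 → r = 0)
    (A : Type) [Ring A] [Algebra R A]
    (M : Type) [AddCommGroup M] [Module A M] [Module R M] [IsScalarTower R A M]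
    [SMulCommClass A R M] [Module.Projective R M] :
    Function.Injective (endTensorQuotToHom (R := R) (A := A) (M := M) x) := by
  classical
  have hone : ∀ r : R, (Ideal.Quotient.mk (Ideal.span {x}) r)
      = r • (1 : R ⧸ Ideal.span {x}) := fun r => by
    rw [Algebra.smul_def, mul_one, Ideal.Quotient.algebraMap_eq]
  have hreg : ∀ m : M, x • m = 0 → m = 0 := by
    obtain ⟨s, hs⟩ := (Module.projective_def (R := R) (P := M)).mp ‹_›
    intro m hm
    have h1 : x • s m = 0 := by rw [← map_smul, hm, map_zero]
    have h2 : s m = 0 := by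
      ext i
      have := congrArg (fun g : M →₀ R => g i) h1
      simp only [Finsupp.coe_smul, Pi.smul_apply, smul_eq_mul, Finsupp.coe_zero,
        Pi.zero_apply] at this ⊢
      exact hx _ this
    have := hs m
    rw [h2, map_zero] at this
    exact this.symm
  have hsurj : ∀ z : (M →ₗ[A] M) ⊗[R] (R ⧸ Ideal.span {x}),
      ∃ f : M →ₗ[A] M, z = f ⊗ₜ[R] (1 : R ⧸ Ideal.span {x}) := by
    intro z
    induction z using TensorProduct.induction_on with
    | zero => exact ⟨0, by simp⟩
    | tmul f q =>
      obtain ⟨r, rfl⟩ := Ideal.Quotient.mk_surjective q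
      exact ⟨r • f, by rw [hone r, TensorProduct.tmul_smul, TensorProduct.smul_tmul']⟩
    | add z w ihz ihw =>
      obtain ⟨f, rfl⟩ := ihz
      obtain ⟨g, rfl⟩ := ihw
      exact ⟨f + g, by rw [TensorProduct.add_tmul]⟩
  rw [injective_iff_map_eq_zero]
  intro z hz
  obtain ⟨f, rfl⟩ := hsurj z
  have key : ∀ m : M, ((1 : R ⧸ Ideal.span {x}) ⊗ₜ[R] f m
      : (R ⧸ Ideal.span {x}) ⊗[R] M) = 0 := by
    intro m
    have := congrArg (fun φ : M →ₗ[A] ((R ⧸ Ideal.span {x}) ⊗[R] M) => φ m) hz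
    simp [endTensorQuotToHom, endTensorQuotAux] at this
    exact this
  have hmem : ∀ m : M, ∃ m' : M, f m = x • m' := by
    intro m
    have h1 : Submodule.Quotient.mk (p := Ideal.span {x} • (⊤ : Submodule R M)) (f m) = 0 := by
      have h := congrArg (TensorProduct.quotTensorEquivQuotSMul M (Ideal.span {x})) (key m)
      rw [map_zero] at h
      rw [← h]
      rw [show (1 : R ⧸ Ideal.span {x}) = Ideal.Quotient.mk _ (1 : R) from rfl,
        TensorProduct.quotTensorEquivQuotSMul_mk_tmul, one_smul]
    have h2 : f m ∈ Ideal.span {x} • (⊤ : Submodule R M) :=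
      (Submodule.Quotient.mk_eq_zero _).mp h1
    refine Submodule.smul_induction_on h2 ?_ ?_
    · intro r hr n _
      obtain ⟨c, rfl⟩ := Ideal.mem_span_singleton'.mp hr
      exact ⟨c • n, by rw [mul_smul, smul_comm]⟩
    · rintro y w ⟨y', hy⟩ ⟨w', hw⟩
      exact ⟨y' + w', by rw [hy, hw, smul_add]⟩
  choose g0 hg0 using hmem
  let g : M →ₗ[A] M :=
    { toFun := g0
      map_add' := fun m m' => by
        have h : x • g0 (m + m') = x • (g0 m + g0 m') := by
          rw [← hg0, map_add, hg0, hg0, smul_add]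
        have := hreg (g0 (m + m') - (g0 m + g0 m')) (by rw [smul_sub, h, sub_self])
        exact sub_eq_zero.mp this
      map_smul' := fun a m => by
        have h : x • g0 (a • m) = x • (a • g0 m) := by
          rw [← hg0, map_smul, hg0, smul_comm]
        have := hreg (g0 (a • m) - a • g0 m) (by rw [smul_sub, h, sub_self])
        simpa using sub_eq_zero.mp this }
  have hfg : f = x • g := LinearMap.ext fun m => hg0 m
  rw [hfg, TensorProduct.smul_tmul]
  have hx1 : x • (1 : R ⧸ Ideal.span {x}) = 0 := by
    rw [← hone x]
    exact Ideal.Quotient.eq_zero_iff_mem.mpr (Ideal.mem_span_singleton_self x)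
  rw [hx1, TensorProduct.tmul_zero]
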